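/- For 0 ≠ x ∈ ℝ^f with f ≥ 2, the quantity ξ(x) = min{t ≥ 0 : x + t𝟙 ∈ O_in^f} is given by the explicit formula ξ(x) = max{0, ‖x‖·α(𝟙ᵀx/(√f·‖x‖))}, where α(s) = (√((f−1)(1−s²)) − s)/√f, and ξ(0) = 0. -/

import Mathlib

noncomputable def onesVec (f : ℕ) : EuclideanSpace ℝ (Fin f) := WithLp.toLp 2 (fun _ => 1)

set_option maxHeartbeats 1000000 in
theorem xi_formula (f : ℕ) (hf : 2 ≤ f) (x : EuclideanSpace ℝ (Fin f)) (hx : x ≠ 0) :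
    IsLeast {t : ℝ | 0 ≤ t ∧ x + t • onesVec f ∈
        {z : EuclideanSpace ℝ (Fin f) | Real.sqrt ((f : ℝ) - 1) * ‖z‖ ≤ ∑ i, z i}}
      (max 0 (‖x‖ *
        ((Real.sqrt (((f : ℝ) - 1) * (1 - ((∑ i, x i) / (Real.sqrt f * ‖x‖)) ^ 2)) -
            (∑ i, x i) / (Real.sqrt f * ‖x‖)) / Real.sqrt f))) ∧
    IsLeast {t : ℝ | 0 ≤ t ∧ (0 : EuclideanSpace ℝ (Fin f)) + t • onesVec f ∈
        {z : EuclideanSpace ℝ (Fin f) | Real.sqrt ((f : ℝ) - 1) * ‖z‖ ≤ ∑ i, z i}}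
      0 := by
  have hF2 : (2:ℝ) ≤ (f:ℝ) := by exact_mod_cast hf
  constructor
  · set F : ℝ := (f:ℝ) with hFdef
    have hF0 : 0 < F := by linarith
    have hF1 : (0:ℝ) ≤ F - 1 := by linarith
    set s : ℝ := ∑ i, x i with hs
    set n : ℝ := ‖x‖ with hn
    have hn0 : 0 < n := norm_pos_iff.mpr hx
    have hxw : (inner ℝ x (onesVec f) : ℝ) = s := by
      simp [onesVec, PiLp.inner_apply, hs, RCLike.inner_apply]
    have hww : (inner ℝ (onesVec f) (onesVec f) : ℝ) = F := by
      rw [PiLp.inner_apply]; simp [onesVec, RCLike.inner_apply]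
      exact hFdef.symm
    have hww' : ‖onesVec f‖^2 = F := by
      rw [← real_inner_self_eq_norm_sq, hww]
    have hsum : ∀ t : ℝ, ∑ i, (x + t • onesVec f) i = s + t * F := by
      intro t
      simp [onesVec, Finset.sum_add_distrib, hs, mul_comm]
      exact Or.inl hFdef.symm
    have hnorm : ∀ t : ℝ, ‖x + t • onesVec f‖^2 = n^2 + 2*t*s + t^2*F := by
      intro t
      rw [norm_add_sq_real, real_inner_smul_right, hxw, norm_smul, mul_pow, hww']
      simp [hn, sq_abs]; ring
    have hCS : s^2 ≤ F * n^2 := by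
      have h := abs_real_inner_le_norm x (onesVec f)
      rw [hxw] at h
      have h2 := mul_self_le_mul_self (abs_nonneg s) h
      nlinarith [h2, sq_abs s, hww', hn0.le, norm_nonneg (onesVec f)]
    have hY0 : 0 ≤ (F-1) * (F*n^2 - s^2) := by
      apply mul_nonneg hF1; linarith
    set Y : ℝ := (F-1) * (F*n^2 - s^2) with hY
    set D : ℝ := Y / F^2 with hD
    have hF20 : (0:ℝ) < F^2 := by positivity
    have hD0 : 0 ≤ D := div_nonneg hY0 hF20.le
    set r : ℝ := Real.sqrt D with hr
    have hr0 : 0 ≤ r := Real.sqrt_nonneg _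
    have hr2 : r^2 = D := Real.sq_sqrt hD0
    have hsF : 0 < Real.sqrt F := Real.sqrt_pos.mpr hF0
    have hsF2 : Real.sqrt F ^ 2 = F := Real.sq_sqrt hF0.le
    have hmsF : Real.sqrt F * Real.sqrt F = F := Real.mul_self_sqrt hF0.le
    have e1 : Real.sqrt ((F-1)*(1 - (s/(Real.sqrt F*n))^2))
        = Real.sqrt Y / (Real.sqrt F * n) := by
      rw [show (F-1)*(1 - (s/(Real.sqrt F*n))^2) = Y/(F*n^2) by
        rw [div_pow, mul_pow, hsF2, hY]
        field_simp]
      rw [Real.sqrt_div hY0, Real.sqrt_mul hF0.le, Real.sqrt_sq hn0.le]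
    have e2 : r = Real.sqrt Y / F := by
      rw [hr, hD, Real.sqrt_div hY0, Real.sqrt_sq hF0.le]
    have hα : n * ((Real.sqrt ((F-1) * (1 - (s / (Real.sqrt F * n)) ^ 2)) -
          s / (Real.sqrt F * n)) / Real.sqrt F) = r - s/F := by
      rw [e1, e2, div_sub_div_same, div_div]
      rw [show Real.sqrt F * n * Real.sqrt F = F * n by
        rw [mul_right_comm, hmsF]]
      rw [div_sub_div_same]
      field_simp
    rw [hα]
    have key : ∀ t : ℝ, 0 ≤ t →
        ((Real.sqrt (F-1) * ‖x + t • onesVec f‖ ≤ ∑ i, (x + t • onesVec f) i) ↔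
          r ≤ t + s/F) := by
      intro t ht
      rw [hsum t]
      have e3 : (t + s/F)^2 = (s+t*F)^2/F^2 := by field_simp; ring
      have e4 : s + t*F = F*(t + s/F) := by field_simp; ring
      constructor
      · intro h
        have hS0 : 0 ≤ s + t * F :=
          le_trans (mul_nonneg (Real.sqrt_nonneg _) (norm_nonneg _)) h
        have hsq : (F-1) * ‖x + t • onesVec f‖^2 ≤ (s + t*F)^2 := by
          have h2 := mul_self_le_mul_self
            (mul_nonneg (Real.sqrt_nonneg (F-1)) (norm_nonneg _)) h
          calc (F-1) * ‖x + t • onesVec f‖^2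
              = (Real.sqrt (F-1) * ‖x + t • onesVec f‖) *
                (Real.sqrt (F-1) * ‖x + t • onesVec f‖) := by
                rw [show ∀ a b : ℝ, (a*b)*(a*b) = a*a*b^2 by intros; ring,
                  Real.mul_self_sqrt hF1]
            _ ≤ (s + t*F) * (s + t*F) := h2
            _ = (s+t*F)^2 := by ring
        rw [hnorm t] at hsq
        have ht' : 0 ≤ t + s/F := by
          have h1 : t + s/F = (s + t*F)/F := by field_simp; ring
          rw [h1]; exact div_nonneg hS0 hF0.le
        have hq : r^2 ≤ (t + s/F)^2 := by
          rw [hr2, hD, e3, div_le_div_iff_of_pos_right hF20, hY]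
          nlinarith [hsq, hF0]
        calc r = Real.sqrt (r^2) := (Real.sqrt_sq hr0).symm
          _ ≤ Real.sqrt ((t+s/F)^2) := Real.sqrt_le_sqrt hq
          _ = t + s/F := Real.sqrt_sq ht'
      · intro h
        have ht' : 0 ≤ t + s/F := le_trans hr0 h
        have hq : r^2 ≤ (t + s/F)^2 := by
          apply pow_le_pow_left₀ hr0 h
        rw [hr2, hD, e3, div_le_div_iff_of_pos_right hF20, hY] at hq
        have hsq : (F-1) * ‖x + t • onesVec f‖^2 ≤ (s + t*F)^2 := by
          rw [hnorm t]; nlinarith [hq, hF0]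
        have hS0 : 0 ≤ s + t * F := by
          rw [e4]; exact mul_nonneg hF0.le ht'
        calc Real.sqrt (F-1) * ‖x + t • onesVec f‖
            = Real.sqrt ((F-1) * ‖x + t • onesVec f‖^2) := by
              rw [Real.sqrt_mul hF1, Real.sqrt_sq (norm_nonneg _)]
          _ ≤ Real.sqrt ((s+t*F)^2) := Real.sqrt_le_sqrt hsq
          _ = s + t*F := Real.sqrt_sq hS0
    constructor
    · refine ⟨le_max_left _ _, ?_⟩
      have hM0 : (0:ℝ) ≤ max 0 (r - s/F) := le_max_left _ _
      exact (key _ hM0).mpr (by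
        have := le_max_right 0 (r - s/F); linarith)
    · rintro t ⟨ht0, htmem⟩
      have := (key t ht0).mp htmem
      exact max_le ht0 (by linarith)
  · constructor
    · refine ⟨le_refl 0, ?_⟩
      simp
    · rintro t ⟨ht0, -⟩
      exact ht0
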